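/- If X ⊆ [0,1] and Y ⊆ [0,1] are both almost full, then their intersection X ∩ Y is almost full. -/
import Mathlib


open MeasureTheory Filter Set

noncomputable section

/-- A sequence of functions on `[0,1]` is *regular* if each member is continuous and
nonnegative on `[0,1]` and has integral over `[0,1]` strictly less than `2⁻ⁿ`. -/
def RegularSeq (h : ℕ → ℝ → ℝ) : Prop :=
  ∀ n : ℕ, ContinuousOn (h n) (Set.Icc 0 1) ∧
    (∀ x ∈ Set.Icc (0:ℝ) 1, 0 ≤ h n x) ∧
    (∫ x in (0:ℝ)..1, h n x) < (1/2 : ℝ) ^ n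

/-- The set `Ω(𝔥)` of points of `[0,1]` at which the partial sums of `∑ hₙ(x)` are
bounded above. -/
def Omega (h : ℕ → ℝ → ℝ) : Set ℝ :=
  {x ∈ Set.Icc (0:ℝ) 1 | ∃ γ : ℝ, ∀ m : ℕ, ∑ n ∈ Finset.range (m+1), h n x ≤ γ}

/-- A subset `X ⊆ [0,1]` is *almost full* if `Ω(𝔥) ⊆ X` for some regular sequence `𝔥`. -/
def AlmostFull (X : Set ℝ) : Prop :=
  ∃ h : ℕ → ℝ → ℝ, RegularSeq h ∧ Omega h ⊆ X

/-- The intersection of two almost full subsets of `[0,1]` is almost full. -/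
theorem stmt3 (X Y : Set ℝ) (hX' : X ⊆ Set.Icc 0 1) (hY' : Y ⊆ Set.Icc 0 1)
    (hX : AlmostFull X) (hY : AlmostFull Y) :
    AlmostFull (X ∩ Y) := by
  obtain ⟨h, hreg, hsub⟩ := hX
  obtain ⟨g, greg, gsub⟩ := hY
  refine ⟨fun n x => h (n+1) x + g (n+1) x, ?_, ?_⟩
  · intro n
    obtain ⟨hc, hnn, hint⟩ := hreg (n+1)
    obtain ⟨gc, gnn, gint⟩ := greg (n+1)
    refine ⟨hc.add gc, fun x hx => add_nonneg (hnn x hx) (gnn x hx), ?_⟩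
    have hI : IntervalIntegrable (h (n+1)) volume 0 1 := by
      apply ContinuousOn.intervalIntegrable
      rwa [Set.uIcc_of_le (by norm_num : (0:ℝ) ≤ 1)]
    have gI : IntervalIntegrable (g (n+1)) volume 0 1 := by
      apply ContinuousOn.intervalIntegrable
      rwa [Set.uIcc_of_le (by norm_num : (0:ℝ) ≤ 1)]
    rw [intervalIntegral.integral_add hI gI]
    have : (1/2:ℝ)^(n+1) + (1/2:ℝ)^(n+1) = (1/2)^n := by ring
    linarith
  · rintro x ⟨hx1, γ, hγ⟩
    have hxI : x ∈ Set.Icc (0:ℝ) 1 := hx1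
    have hboth : ∀ m : ℕ, (∑ n ∈ Finset.range m, h (n+1) x ≤ γ) ∧
        (∑ n ∈ Finset.range m, g (n+1) x ≤ γ) := by
      intro m
      have h1 : ∑ n ∈ Finset.range m, (h (n+1) x + g (n+1) x) ≤ γ := by
        refine le_trans ?_ (hγ m)
        apply Finset.sum_le_sum_of_subset_of_nonneg
        · exact Finset.range_subset_range.2 (Nat.le_succ m)
        · intro i _ _
          exact add_nonneg ((hreg (i+1)).2.1 x hxI) ((greg (i+1)).2.1 x hxI)
      rw [Finset.sum_add_distrib] at h1
      have hs : 0 ≤ ∑ n ∈ Finset.range m, h (n+1) x :=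
        Finset.sum_nonneg fun i _ => (hreg (i+1)).2.1 x hxI
      have gs : 0 ≤ ∑ n ∈ Finset.range m, g (n+1) x :=
        Finset.sum_nonneg fun i _ => (greg (i+1)).2.1 x hxI
      exact ⟨by linarith, by linarith⟩
    constructor
    · apply hsub
      refine ⟨hxI, h 0 x + γ, fun m => ?_⟩
      rw [Finset.sum_range_succ' (fun n => h n x) m]
      have := (hboth m).1
      linarith
    · apply gsub
      refine ⟨hxI, g 0 x + γ, fun m => ?_⟩
      rw [Finset.sum_range_succ' (fun n => g n x) m]
      have := (hboth m).2
      linarith
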